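/- (Quantum patching theorem, operator form.) Let H be a complex inner product space, K a finite type, and w : K → H. Let A_u, A_d, A'_u, A'_d, B_u, B_d, B'_u, B'_d be linear endomorphisms of H with A_u + A_d = 1, A'_u + A'_d = 1, B_u + B_d = 1, B'_u + B'_d = 1, and such that each of A_u, A_d, A'_u, A'_d commutes with each of B_u, B_d, B'_u, B'_d. Define D^{patch}((i,i',j,j',k),(ī,ī',j̄,j̄',k̄)) := ⟪A_i A'_{i'} B_j B'_{j'} w_k, A_ī A'_{ī'} B_j̄ B'_{j̄'} w_k̄⟫ for i,i',j,j',ī,ī',j̄,j̄' ∈ {u,d} and k, k̄ ∈ K. Then: (1) D^{patch} is Hermitian: D^{patch}(x,y) = conj(D^{patch}(y,x)); (2) for every finite family x_1,…,x_m of arguments, the matrix (D^{patch}(x_p,x_q)) is positive semidefinite; (3) D^{patch} has the four setting-wise decoherence functionals as marginals: ∑_{i',ī',j',j̄'} D^{patch}((i,i',j,j',k),(ī,ī',j̄,j̄',k̄)) = ⟪A_i B_j w_k, A_ī B_j̄ w_k̄⟫; ∑_{i',ī',j,j̄} D^{patch} = ⟪A_i B'_{j'} w_k, A_ī B'_{j̄'}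 w_k̄⟫; ∑_{i,ī,j',j̄'} D^{patch} = ⟪A'_{i'} B_j w_k, A'_{ī'} B_j̄ w_k̄⟫; ∑_{i,ī,j,j̄} D^{patch} = ⟪A'_{i'} B'_{j'} w_k, A'_{ī'} B'_{j̄'} w_k̄⟫. -/

import Mathlib

open scoped ComplexOrder

/-- The patched decoherence functional
`D^{patch}((i,i',j,j',k),(ī,ī',j̄,j̄',k̄)) := ⟪A_i A'_{i'} B_j B'_{j'} w_k, … w_k̄⟫`. -/
noncomputable def Dpatch {H K : Type*} [NormedAddCommGroup H] [InnerProductSpace ℂ H]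
    (A A' B B' : Bool → (H →ₗ[ℂ] H)) (w : K → H)
    (x y : Bool × Bool × Bool × Bool × K) : ℂ :=
  inner ℂ (A x.1 (A' x.2.1 (B x.2.2.1 (B' x.2.2.2.1 (w x.2.2.2.2)))))
        (A y.1 (A' y.2.1 (B y.2.2.1 (B' y.2.2.2.1 (w y.2.2.2.2)))))

/-- Quantum patching theorem, operator form: given resolutions of the
identity `A, A', B, B'` with the `A`-type operators commuting with the `B`-type ones, the
patched decoherence functional `D^{patch}` is Hermitian, strongly positive, and has the
four setting-wise decoherence functionals as marginals. -/
theorem quantum_patching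
    {H K : Type*} [NormedAddCommGroup H] [InnerProductSpace ℂ H] [Fintype K]
    (A A' B B' : Bool → (H →ₗ[ℂ] H)) (w : K → H)
    (hA : A true + A false = LinearMap.id)
    (hA' : A' true + A' false = LinearMap.id)
    (hB : B true + B false = LinearMap.id)
    (hB' : B' true + B' false = LinearMap.id)
    (hAB : ∀ i j (x : H), A i (B j x) = B j (A i x))
    (hAB' : ∀ i j' (x : H), A i (B' j' x) = B' j' (A i x))
    (hA'B : ∀ i' j (x : H), A' i' (B j x) = B j (A' i' x))
    (hA'B' : ∀ i' j' (x : H), A' i' (B' j' x) = B' j' (A' i' x)) :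
    -- (1) Hermiticity
    (∀ x y : Bool × Bool × Bool × Bool × K,
      Dpatch A A' B B' w x y = starRingEnd ℂ (Dpatch A A' B B' w y x)) ∧
    -- (2) strong positivity
    (∀ (m : ℕ) (x : Fin m → Bool × Bool × Bool × Bool × K),
      (Matrix.of fun p q : Fin m =>
        Dpatch A A' B B' w (x p) (x q)).PosSemidef) ∧
    -- (3) the four setting-wise decoherence functionals are marginals
    (∀ i ibar j jbar (k kbar : K),
      ∑ i', ∑ ibar', ∑ j', ∑ jbar',
          Dpatch A A' B B' w (i, i', j, j', k) (ibar, ibar', jbar, jbar', kbar)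
        = inner ℂ (A i (B j (w k))) (A ibar (B jbar (w kbar)))) ∧
    (∀ i ibar j' jbar' (k kbar : K),
      ∑ i', ∑ ibar', ∑ j, ∑ jbar,
          Dpatch A A' B B' w (i, i', j, j', k) (ibar, ibar', jbar, jbar', kbar)
        = inner ℂ (A i (B' j' (w k))) (A ibar (B' jbar' (w kbar)))) ∧
    (∀ i' ibar' j jbar (k kbar : K),
      ∑ i, ∑ ibar, ∑ j', ∑ jbar',
          Dpatch A A' B B' w (i, i', j, j', k) (ibar, ibar', jbar, jbar', kbar)
        = inner ℂ (A' i' (B j (w k))) (A' ibar' (B jbar (w kbar)))) ∧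
    (∀ i' ibar' j' jbar' (k kbar : K),
      ∑ i, ∑ ibar, ∑ j, ∑ jbar,
          Dpatch A A' B B' w (i, i', j, j', k) (ibar, ibar', jbar, jbar', kbar)
        = inner ℂ (A' i' (B' j' (w k))) (A' ibar' (B' jbar' (w kbar)))) := by

  classical
  -- pointwise resolutions of identity
  have hAe : ∀ v : H, A true v + A false v = v := fun v => by
    simpa using congrArg (fun T : H →ₗ[ℂ] H => T v) hA
  have hA'e : ∀ v : H, A' true v + A' false v = v := fun v => by
    simpa using congrArg (fun T : H →ₗ[ℂ] H => T v) hA'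
  have hBe : ∀ v : H, B true v + B false v = v := fun v => by
    simpa using congrArg (fun T : H →ₗ[ℂ] H => T v) hB
  have hB'e : ∀ v : H, B' true v + B' false v = v := fun v => by
    simpa using congrArg (fun T : H →ₗ[ℂ] H => T v) hB'
  refine ⟨?herm, ?pos, ?m1, ?m2, ?m3, ?m4⟩
  · intro x y
    simp [Dpatch, inner_conj_symm]
  · intro m x
    set f : Fin m → H := fun p =>
      A (x p).1 (A' (x p).2.1 (B (x p).2.2.1 (B' (x p).2.2.2.1 (w (x p).2.2.2.2)))) with hf
    rw [Matrix.posSemidef_iff_dotProduct_mulVec]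
    constructor
    · ext p q
      simp [Matrix.conjTranspose_apply, Dpatch, inner_conj_symm]
    · intro v
      have key : dotProduct (star v) ((Matrix.of fun p q : Fin m =>
          Dpatch A A' B B' w (x p) (x q)).mulVec v)
          = inner ℂ (∑ p, v p • f p) (∑ q, v q • f q) := by
        simp [dotProduct, Matrix.mulVec, inner_sum, sum_inner, inner_smul_left,
          inner_smul_right, Finset.mul_sum, Dpatch, hf, mul_comm, mul_left_comm, mul_assoc, -inner_self_eq_norm_sq_to_K]
        rw [Finset.sum_comm]
      rw [key, @inner_self_eq_norm_sq_to_K ℂ]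
      positivity
  · intro i ibar j jbar k kbar
    simp only [Dpatch, Fintype.sum_bool, ← inner_add_right, ← inner_add_left, ← map_add,
      hAe, hA'e, hBe, hB'e]
  · intro i ibar j' jbar' k kbar
    simp only [Dpatch, Fintype.sum_bool, ← inner_add_right, ← inner_add_left, ← map_add,
      hAe, hA'e, hBe, hB'e]
  · intro i' ibar' j jbar k kbar
    simp only [Dpatch, Fintype.sum_bool, ← inner_add_right, ← inner_add_left, ← map_add,
      hAe, hA'e, hBe, hB'e]
  · intro i' ibar' j' jbar' k kbar
    simp only [Dpatch, Fintype.sum_bool, ← inner_add_right, ← inner_add_left, ← map_add,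
      hAe, hA'e, hBe, hB'e]
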